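/- Let g(x, y) = (x + x^2 + ... + x^q) + y*(x^{q+1} + x^{q+2} + ...) as a formal power series in x and y, with q ≥ 1. Then the coefficient of x^n y^m in g(x, y)^r equals ∑_{j} (-1)^{j - m} * C(j, m) * C(r, j) * C(n - q*j - 1, r - 1). -/

import Mathlib

set_option maxRecDepth 8000

open MvPowerSeries

/-- Integer-valued binomial coefficient with the convention `C(a, b) = 0` when `b < 0`
or `b > a`. -/
def chZ (a b : ℤ) : ℤ := if 0 ≤ b ∧ b ≤ a then (a.toNat.choose b.toNat : ℤ) else 0

/-- The generating function `g(x, y) = x(1 - x^q)/(1 - x) + y x^{q+1}/(1 - x)` as a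
formal power series over `ℤ` in the two variables `x = X 0` and `y = X 1`. -/
noncomputable def g (q : ℕ) : MvPowerSeries (Fin 2) ℤ :=
  X 0 * (1 - (X 0) ^ q) * invOfUnit (1 - X 0) 1 +
    X 1 * (X 0) ^ (q + 1) * invOfUnit (1 - X 0) 1

namespace Stmt8Aux

/-- The series `(1 - x)^{-(k+1)}` in the two-variable power series ring. -/
noncomputable def H (k : ℕ) : MvPowerSeries (Fin 2) ℤ :=
  fun d => if d 1 = 0 then ((k + d 0).choose k : ℤ) else 0

lemma coeff_H (k : ℕ) (d : Fin 2 →₀ ℕ) :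
    MvPowerSeries.coeff (R := ℤ) d (H k) = if d 1 = 0 then ((k + d 0).choose k : ℤ) else 0 :=
  rfl

lemma coeff_X0_mul (φ : MvPowerSeries (Fin 2) ℤ) (d : Fin 2 →₀ ℕ) :
    MvPowerSeries.coeff (R := ℤ) d (X 0 * φ) =
      if 1 ≤ d 0 then MvPowerSeries.coeff (R := ℤ) (d - Finsupp.single 0 1) φ else 0 := by
  rw [X_def, coeff_monomial_mul]
  simp [Finsupp.single_le_iff]

lemma sub_single_apply_one (d : Fin 2 →₀ ℕ) :
    (d - Finsupp.single 0 1 : Fin 2 →₀ ℕ) 1 = d 1 := by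
  rw [Finsupp.tsub_apply]
  simp

lemma sub_single_apply_zero (d : Fin 2 →₀ ℕ) :
    (d - Finsupp.single 0 1 : Fin 2 →₀ ℕ) 0 = d 0 - 1 := by
  rw [Finsupp.tsub_apply]
  simp

lemma one_sub_X0_mul_H_zero : ((1 : MvPowerSeries (Fin 2) ℤ) - X 0) * H 0 = 1 := by
  ext d
  rw [sub_mul, one_mul, map_sub, coeff_X0_mul]
  classical
  rw [MvPowerSeries.coeff_one]
  simp only [coeff_H, sub_single_apply_one, sub_single_apply_zero]
  have hd : d = 0 ↔ d 0 = 0 ∧ d 1 = 0 := by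
    rw [Finsupp.ext_iff, Fin.forall_fin_two]
    rfl
  by_cases h1 : d 1 = 0 <;> by_cases h0 : 1 ≤ d 0 <;>
    simp [h1, h0, hd] <;> omega

lemma one_sub_X0_mul_H_succ (k : ℕ) :
    ((1 : MvPowerSeries (Fin 2) ℤ) - X 0) * H (k + 1) = H k := by
  ext d
  rw [sub_mul, one_mul, map_sub, coeff_X0_mul]
  simp only [coeff_H, sub_single_apply_one, sub_single_apply_zero]
  by_cases h1 : d 1 = 0
  · by_cases h0 : 1 ≤ d 0
    · simp only [h1, if_true, h0]
      have e1 : k + 1 + d 0 = (k + d 0) + 1 := by omega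
      have e2 : k + 1 + (d 0 - 1) = k + d 0 := by omega
      rw [e1, e2, Nat.choose_succ_succ']
      push_cast
      ring
    · have hz : d 0 = 0 := by omega
      simp [h1, h0, hz]
  · simp [h1]


lemma pow_one_sub_mul_H (k : ℕ) :
    ((1 : MvPowerSeries (Fin 2) ℤ) - X 0) ^ (k + 1) * H k = 1 := by
  induction k with
  | zero => simpa using one_sub_X0_mul_H_zero
  | succ k ih =>
      have h : ((1 : MvPowerSeries (Fin 2) ℤ) - X 0) ^ (k + 2) * H (k + 1)
          = ((1 : MvPowerSeries (Fin 2) ℤ) - X 0) ^ (k + 1) *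
              (((1 : MvPowerSeries (Fin 2) ℤ) - X 0) * H (k + 1)) := by
        rw [pow_succ]
        ring
      rw [h, one_sub_X0_mul_H_succ, ih]

lemma one_sub_mul_inv :
    ((1 : MvPowerSeries (Fin 2) ℤ) - X 0) * invOfUnit (1 - X 0) 1 = 1 :=
  mul_invOfUnit _ 1 (by simp)

lemma inv_pow_eq_H (r : ℕ) (hr : 1 ≤ r) :
    (invOfUnit ((1 : MvPowerSeries (Fin 2) ℤ) - X 0) 1) ^ r = H (r - 1) := by
  obtain ⟨k, rfl⟩ : ∃ k, r = k + 1 := ⟨r - 1, by omega⟩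
  have h2 := pow_one_sub_mul_H k
  have h3 : (((1 : MvPowerSeries (Fin 2) ℤ) - X 0) * invOfUnit (1 - X 0) 1) ^ (k + 1) * H k
      = H k := by
    rw [one_sub_mul_inv, one_pow, one_mul]
  have h4 : (k + 1) - 1 = k := rfl
  rw [h4]
  calc (invOfUnit ((1 : MvPowerSeries (Fin 2) ℤ) - X 0) 1) ^ (k + 1)
      = (invOfUnit ((1 : MvPowerSeries (Fin 2) ℤ) - X 0) 1) ^ (k + 1) *
          (((1 : MvPowerSeries (Fin 2) ℤ) - X 0) ^ (k + 1) * H k) := by rw [h2, mul_one]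
    _ = (((1 : MvPowerSeries (Fin 2) ℤ) - X 0) * invOfUnit (1 - X 0) 1) ^ (k + 1) * H k := by
        rw [mul_pow]
        ring
    _ = H k := h3

lemma one_sub_pow {R : Type*} [CommRing R] (a : R) (n : ℕ) :
    (1 - a) ^ n = ∑ i ∈ Finset.range (n + 1), (-a) ^ i * (n.choose i : R) := by
  rw [show (1 - a) = (-a + 1) by ring, add_pow]
  simp

lemma monomial_eq (s t : ℕ) :
    (MvPowerSeries.monomial (R := ℤ) (Finsupp.single (0 : Fin 2) s + Finsupp.single 1 t) 1)
      = X 0 ^ s * X 1 ^ t := by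
  rw [X_pow_eq, X_pow_eq, monomial_mul_monomial, mul_one]

lemma key' (q r : ℕ) :
    (X 0 * (1 - (1 - X 1) * X 0 ^ q) : MvPowerSeries (Fin 2) ℤ) ^ r
      = ∑ j ∈ Finset.range (r + 1), ∑ i ∈ Finset.range (j + 1),
        ((-1 : ℤ) ^ (i + j) * (j.choose i : ℤ) * (r.choose j : ℤ)) •
          MvPowerSeries.monomial (R := ℤ) (Finsupp.single 0 (r + q * j) + Finsupp.single 1 i) 1 := by
  rw [mul_pow, one_sub_pow ((1 - X 1) * X 0 ^ q) r, Finset.mul_sum]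
  refine Finset.sum_congr rfl fun j hj => ?_
  have hn : (-((1 - X 1) * X 0 ^ q) : MvPowerSeries (Fin 2) ℤ) ^ j
      = (-1) ^ j * ((1 - X 1) ^ j * (X 0 ^ q) ^ j) := by
    rw [neg_pow, mul_pow]
  rw [hn, one_sub_pow (X 1) j, Finset.sum_mul, Finset.mul_sum, Finset.sum_mul,
    Finset.mul_sum]
  refine Finset.sum_congr rfl fun i hi => ?_
  rw [zsmul_eq_mul, monomial_eq, pow_add (X 0 : MvPowerSeries (Fin 2) ℤ) r (q * j),
    pow_mul (X 0 : MvPowerSeries (Fin 2) ℤ) q j, neg_pow (X 1) i]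
  push_cast
  rw [pow_add (-1 : MvPowerSeries (Fin 2) ℤ) i j]
  ring

lemma key (q r : ℕ) (hr : 1 ≤ r) :
    g q ^ r = ∑ j ∈ Finset.range (r + 1), ∑ i ∈ Finset.range (j + 1),
      ((-1 : ℤ) ^ (i + j) * (j.choose i : ℤ) * (r.choose j : ℤ)) •
        (MvPowerSeries.monomial (R := ℤ) (Finsupp.single 0 (r + q * j) + Finsupp.single 1 i) 1
          * H (r - 1)) := by
  have hg : g q = (X 0 * (1 - (1 - X 1) * X 0 ^ q)) * invOfUnit (1 - X 0) 1 := by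
    unfold g; ring
  rw [hg, mul_pow, inv_pow_eq_H r hr, key' q r, Finset.sum_mul]
  refine Finset.sum_congr rfl fun j hj => ?_
  rw [Finset.sum_mul]
  refine Finset.sum_congr rfl fun i hi => ?_
  rw [smul_mul_assoc]

lemma e_apply_zero (a b : ℕ) :
    (Finsupp.single (0 : Fin 2) a + Finsupp.single 1 b : Fin 2 →₀ ℕ) 0 = a := by
  simp

lemma e_apply_one (a b : ℕ) :
    (Finsupp.single (0 : Fin 2) a + Finsupp.single 1 b : Fin 2 →₀ ℕ) 1 = b := by
  simp

lemma coeff_mono_H (k s i n m : ℕ) :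
    MvPowerSeries.coeff (R := ℤ) (Finsupp.single 0 n + Finsupp.single 1 m)
        (MvPowerSeries.monomial (R := ℤ) (Finsupp.single 0 s + Finsupp.single 1 i) 1 * H k)
      = if i = m ∧ s ≤ n then ((k + (n - s)).choose k : ℤ) else 0 := by
  rw [coeff_monomial_mul]
  by_cases hle : (Finsupp.single (0 : Fin 2) s + Finsupp.single 1 i : Fin 2 →₀ ℕ)
      ≤ Finsupp.single 0 n + Finsupp.single 1 m
  · have hs : s ≤ n := by
      have h := Finsupp.le_def.mp hle 0
      rwa [e_apply_zero, e_apply_zero] at h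
    have hi : i ≤ m := by
      have h := Finsupp.le_def.mp hle 1
      rwa [e_apply_one, e_apply_one] at h
    rw [if_pos hle, one_mul, coeff_H, Finsupp.tsub_apply, Finsupp.tsub_apply,
      e_apply_zero, e_apply_zero, e_apply_one, e_apply_one]
    by_cases him : i = m
    · rw [if_pos (by omega), if_pos ⟨him, hs⟩]
    · rw [if_neg (by omega), if_neg (by tauto)]
  · rw [if_neg hle, if_neg]
    rintro ⟨rfl, hs⟩
    have h1 : Finsupp.single (0 : Fin 2) s ≤ Finsupp.single 0 n :=
      Finsupp.single_le_iff.mpr (by simp [hs])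
    exact hle (add_le_add h1 le_rfl)

lemma chZ_eq (q r n j : ℕ) (hr : 1 ≤ r) :
    chZ ((n : ℤ) - q * j - 1) ((r : ℤ) - 1)
      = if r + q * j ≤ n then (((r - 1) + (n - (r + q * j))).choose (r - 1) : ℤ) else 0 := by
  unfold chZ
  by_cases h : r + q * j ≤ n
  · rw [if_pos (by constructor <;> [omega; push_cast <;> omega]), if_pos h]
    have h1 : ((n : ℤ) - q * j - 1).toNat = (r - 1) + (n - (r + q * j)) := by
      push_cast
      omega
    have h2 : ((r : ℤ) - 1).toNat = r - 1 := by omega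
    rw [h1, h2]
  · rw [if_neg (by push_neg; intro _; push_cast; omega), if_neg h]

end Stmt8Aux

open Stmt8Aux in
/-- For `q ≥ 1` and `r ≥ 1`, the coefficient of `x^n y^m` in `g(x, y)^r` equals
`∑_j (-1)^{j - m} C(j, m) C(r, j) C(n - q*j - 1, r - 1)`, the sum ranging over all `j`
for which the summand is nonzero (hence `0 ≤ j ≤ r` suffices). -/
theorem stmt_8 (q r n m : ℕ) (hq : 1 ≤ q) (hr : 1 ≤ r) :
    MvPowerSeries.coeff (R := ℤ) (Finsupp.single 0 n + Finsupp.single 1 m) ((g q) ^ r) =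
      ∑ j ∈ Finset.range (r + 1),
        (-1 : ℤ) ^ (m + j) * (j.choose m : ℤ) * (r.choose j : ℤ) *
          chZ ((n : ℤ) - q * j - 1) ((r : ℤ) - 1) := by
  rw [key q r hr, map_sum]
  refine Finset.sum_congr rfl fun j hj => ?_
  rw [map_sum]
  have hterm : ∀ i ∈ Finset.range (j + 1),
      MvPowerSeries.coeff (R := ℤ) (Finsupp.single 0 n + Finsupp.single 1 m)
        (((-1 : ℤ) ^ (i + j) * (j.choose i : ℤ) * (r.choose j : ℤ)) •
          (MvPowerSeries.monomial (R := ℤ) (Finsupp.single 0 (r + q * j) + Finsupp.single 1 i) 1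
            * H (r - 1)))
      = if i = m then
          ((-1 : ℤ) ^ (m + j) * (j.choose m : ℤ) * (r.choose j : ℤ) *
            (if r + q * j ≤ n then (((r - 1) + (n - (r + q * j))).choose (r - 1) : ℤ) else 0))
        else 0 := by
    intro i _
    rw [map_zsmul, coeff_mono_H, smul_eq_mul]
    by_cases him : i = m
    · subst him
      rw [if_pos rfl]
      by_cases hle : r + q * j ≤ n
      · rw [if_pos ⟨rfl, hle⟩, if_pos hle]
        try ring
      · rw [if_neg (by tauto), if_neg hle]
        try ring
    · rw [if_neg (by tauto), if_neg him, mul_zero]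
  rw [Finset.sum_congr rfl hterm, Finset.sum_ite_eq' (Finset.range (j + 1)) m, chZ_eq q r n j hr]
  by_cases hm : m ∈ Finset.range (j + 1)
  · rw [if_pos hm]
  · rw [if_neg hm]
    have hc : j.choose m = 0 := Nat.choose_eq_zero_of_lt (by simpa using hm)
    rw [hc]
    push_cast
    ring
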